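/- Under the hypotheses of the ARMA fitting proposition (i.e., $O^q$ full column rank), the ARMA coefficients may be chosen explicitly as $[\alpha_{t-1} | \cdots | \alpha_{t-q}] = C_t A_{t-1}\cdots A_{t-q} O^{q^+}$ and $[\beta_{t-1}|\cdots|\beta_{t-q}] = -C_t A_{t-1}\cdots A_{t-q} O^{q^+} G^q + [C_t B_{t-1},\; C_t A_{t-1} B_{t-2},\; \ldots,\; C_t A_{t-1}\cdots A_{t-q+1} B_{t-q}]$, and with these coefficients the ARMA relation $\delta z_t = \sum_{i=1}^q \alpha_{t-i}\delta z_{t-i} + \sum_{i=1}^q \beta_{t-i}\delta u_{t-i}$ holds exactly for all system trajectories. -/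

import Mathlib

open Matrix

private lemma mulVec_sum' {n' m' : ℕ} {ι : Type*} (M : Matrix (Fin n') (Fin m') ℝ)
    (s : Finset ι) (f : ι → Fin m' → ℝ) :
    M *ᵥ (∑ i ∈ s, f i) = ∑ i ∈ s, M *ᵥ f i := by
  calc M *ᵥ (∑ i ∈ s, f i) = M.mulVecLin (∑ i ∈ s, f i) := rfl
    _ = ∑ i ∈ s, M.mulVecLin (f i) := map_sum _ f s
    _ = ∑ i ∈ s, M *ᵥ f i := rfl

/-- Under full column rank of `O^q` (with left inverse `Oplus`), the ARMA
coefficients may be chosen explicitly as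
`[α] = C_t A_{t-1}⋯A_{t-q} O^{q+}` and
`[β] = -C_t A_{t-1}⋯A_{t-q} O^{q+} G^q + [C_t B_{t-1}, C_t A_{t-1} B_{t-2}, …]`,
and with these coefficients the order-`q` ARMA relation holds exactly on all trajectories.
Time shifted: `t - q ↦ 0`, `t ↦ q`; `Φ j l` is the state transition matrix from `l` to `j`. -/
theorem arma_explicit_coefficients
    (n m p q : ℕ) (hq : 0 < q)
    (A : ℕ → Matrix (Fin n) (Fin n) ℝ)
    (B : ℕ → Matrix (Fin n) (Fin m) ℝ)
    (C : ℕ → Matrix (Fin p) (Fin n) ℝ)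
    (Φ : ℕ → ℕ → Matrix (Fin n) (Fin n) ℝ)
    (hΦdiag : ∀ l, Φ l l = 1)
    (hΦ : ∀ j l, l ≤ j → Φ (j + 1) l = A j * Φ j l)
    (O : Matrix (Fin q × Fin p) (Fin n) ℝ)
    (hO : ∀ (j : Fin q) (i : Fin p) (k : Fin n), O (j, i) k = (C j * Φ j 0) i k)
    (G : Matrix (Fin q × Fin p) (Fin q × Fin m) ℝ)
    (hG : ∀ (j : Fin q) (i : Fin p) (l : Fin q) (r : Fin m),
      G (j, i) (l, r) = if (l : ℕ) < (j : ℕ) then (C j * Φ j (l + 1) * B l) i r else 0)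
    (Oplus : Matrix (Fin n) (Fin q × Fin p) ℝ)
    (hOplus : Oplus * O = 1)
    -- explicit coefficient matrices
    (αmat : Matrix (Fin p) (Fin q × Fin p) ℝ)
    (hα : αmat = C q * Φ q 0 * Oplus)
    (D : Matrix (Fin p) (Fin q × Fin m) ℝ)
    (hD : ∀ (i : Fin p) (l : Fin q) (r : Fin m), D i (l, r) = (C q * Φ q (l + 1) * B l) i r)
    (βmat : Matrix (Fin p) (Fin q × Fin m) ℝ)
    (hβ : βmat = -αmat * G + D) :
    ∀ (x : ℕ → Fin n → ℝ) (u : ℕ → Fin m → ℝ) (z : ℕ → Fin p → ℝ),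
      (∀ k, k < q → x (k + 1) = A k *ᵥ x k + B k *ᵥ u k) →
      (∀ k, k ≤ q → z k = C k *ᵥ x k) →
      z q = ∑ j : Fin q,
        ((fun i i' => αmat i (j, i')) *ᵥ z j + (fun i r => βmat i (j, r)) *ᵥ u j) := by
  intro x u z hx hz
  -- closed-form state formula
  have hstate : ∀ k, k ≤ q →
      x k = Φ k 0 *ᵥ x 0 + ∑ l ∈ Finset.range k, (Φ k (l + 1) * B l) *ᵥ u l := by
    intro k
    induction k with
    | zero => intro _; simp [hΦdiag]
    | succ k ih =>
      intro hk
      have hk' : k ≤ q := Nat.le_of_succ_le hk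
      rw [hx k (Nat.lt_of_succ_le hk), ih hk', mulVec_add, mulVec_sum', mulVec_mulVec,
        ← hΦ k 0 (Nat.zero_le _), add_assoc, Finset.sum_range_succ]
      congr 1
      congr 1
      · refine Finset.sum_congr rfl fun l hl => ?_
        rw [mulVec_mulVec, ← Matrix.mul_assoc, ← hΦ k (l + 1) (Finset.mem_range.mp hl)]
      · rw [hΦdiag]
        simp
  set Zvec : Fin q × Fin p → ℝ := fun ji => z ji.1 ji.2 with hZvec
  set Uvec : Fin q × Fin m → ℝ := fun lr => u lr.1 lr.2 with hUvec
  -- stacked output equation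
  have hstack : Zvec = O *ᵥ x 0 + G *ᵥ Uvec := by
    funext ji
    obtain ⟨j, i⟩ := ji
    have hzj := hz j (le_of_lt j.2)
    have hxj := hstate j (le_of_lt j.2)
    have hOx : (O *ᵥ x 0) (j, i) = ((C j * Φ j 0) *ᵥ x 0) i := by
      simp [mulVec, dotProduct, hO]
    have hGu : (G *ᵥ Uvec) (j, i)
        = ∑ l ∈ Finset.range j, ((C j * Φ j (l + 1) * B l) *ᵥ u l) i := by
      have h1 : (G *ᵥ Uvec) (j, i) = ∑ l : Fin q, ∑ r : Fin m,
          (if (l : ℕ) < (j : ℕ) then (C j * Φ j (l + 1) * B l) i r else 0) * u l r := by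
        simp [mulVec, dotProduct, Fintype.sum_prod_type, hG, hUvec]
      have h2 : ∀ l : Fin q, (∑ r : Fin m,
          (if (l : ℕ) < (j : ℕ) then (C j * Φ j (l + 1) * B l) i r else 0) * u l r)
          = if (l : ℕ) < (j : ℕ) then ((C j * Φ j (l + 1) * B l) *ᵥ u l) i else 0 := by
        intro l
        by_cases h : (l : ℕ) < (j : ℕ) <;> simp [h, mulVec, dotProduct]
      have hfilter : (Finset.range q).filter (fun l => l < (j : ℕ)) = Finset.range j := by
        ext l
        simp only [Finset.mem_filter, Finset.mem_range]
        omega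
      rw [h1, Finset.sum_congr rfl fun l _ => h2 l, Fin.sum_univ_eq_sum_range
        (fun l => if l < (j : ℕ) then ((C j * Φ j (l + 1) * B l) *ᵥ u l) i else 0),
        ← Finset.sum_filter, hfilter]
    have hval : Zvec (j, i) = (C j *ᵥ x j) i := by rw [hZvec]; simp [hzj]
    rw [hval, hxj, mulVec_add, mulVec_sum']
    simp only [Pi.add_apply, Finset.sum_apply, mulVec_mulVec, hOx, hGu]
    congr 1
    refine Finset.sum_congr rfl fun l _ => ?_
    rw [Matrix.mul_assoc]
  -- sum over blocks equals stacked mulVec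
  have hsum : (∑ j : Fin q,
      ((fun i i' => αmat i (j, i')) *ᵥ z j + (fun i r => βmat i (j, r)) *ᵥ u j))
      = αmat *ᵥ Zvec + βmat *ᵥ Uvec := by
    funext i
    simp only [Finset.sum_apply, Pi.add_apply, mulVec, dotProduct,
      Fintype.sum_prod_type, hZvec, hUvec]
    rw [Finset.sum_add_distrib]
  have hαO : αmat * O = C q * Φ q 0 := by
    rw [hα, Matrix.mul_assoc, hOplus, Matrix.mul_one]
  have hneg : (-αmat * G) *ᵥ Uvec = -((αmat * G) *ᵥ Uvec) := by
    rw [Matrix.neg_mul, neg_mulVec]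
  have hDu : D *ᵥ Uvec = ∑ l ∈ Finset.range q, (C q * Φ q (l + 1) * B l) *ᵥ u l := by
    funext i
    simp only [mulVec, dotProduct, Fintype.sum_prod_type, hD, hUvec, Finset.sum_apply]
    exact Fin.sum_univ_eq_sum_range
      (fun l => ∑ r : Fin m, (C q * Φ q (l + 1) * B l) i r * u l r) q
  have hsum2 : (∑ l ∈ Finset.range q, C q *ᵥ ((Φ q (l + 1) * B l) *ᵥ u l))
      = ∑ l ∈ Finset.range q, (C q * Φ q (l + 1) * B l) *ᵥ u l := by
    refine Finset.sum_congr rfl fun l _ => ?_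
    rw [mulVec_mulVec, Matrix.mul_assoc]
  rw [hsum, hstack, mulVec_add, mulVec_mulVec, mulVec_mulVec, hβ, add_mulVec,
    hneg, hαO, hDu, hz q le_rfl, hstate q le_rfl, mulVec_add, mulVec_sum',
    mulVec_mulVec, hsum2]
  abel
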